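/- Let g(z) = Σ_{n≥1} A_n z^n solve g = zψ(g) with ψ having nonnegative coefficients and b_0 = ψ(0) > 0. Define g_0 = g and g_k(z) = z(ψ(g_{k−1}(z)) − b_0) for k ≥ 1, with coefficients g_k(z) = Σ A_n^{(k)} z^n. Then for all n ≥ 1 and k ≥ 1: 0 ≤ A_n^{(k)} ≤ A_n^{(k−1)} ≤ A_n, and A_n^{(k)} = 0 whenever 1 ≤ n ≤ k. -/

import Mathlib

open PowerSeries

/-- Composition ψ(g) of formal power series, valid when g has zero constant term. -/
noncomputable def psComp (ψ g : PowerSeries ℝ) : PowerSeries ℝ :=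
  PowerSeries.mk fun n => ∑ k ∈ Finset.range (n + 1),
    (PowerSeries.coeff (R := ℝ) k ψ) * (PowerSeries.coeff (R := ℝ) n (g ^ k))

lemma psComp_coeff (ψ g : PowerSeries ℝ) (n : ℕ) :
    PowerSeries.coeff (R := ℝ) n (psComp ψ g) = ∑ k ∈ Finset.range (n + 1),
      (PowerSeries.coeff (R := ℝ) k ψ) * (PowerSeries.coeff (R := ℝ) n (g ^ k)) := by
  simp [psComp]

lemma coeff_pow_nonneg {g : PowerSeries ℝ} {m : ℕ}
    (h : ∀ j ≤ m, 0 ≤ PowerSeries.coeff (R := ℝ) j g) :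
    ∀ k, ∀ j ≤ m, 0 ≤ PowerSeries.coeff (R := ℝ) j (g ^ k) := by
  intro k
  induction k with
  | zero =>
    intro j hj
    simp [PowerSeries.coeff_one]
    positivity
  | succ k ih =>
    intro j hj
    rw [pow_succ, PowerSeries.coeff_mul]
    refine Finset.sum_nonneg fun p hp => ?_
    rw [Finset.HasAntidiagonal.mem_antidiagonal] at hp
    exact mul_nonneg (ih p.1 (le_trans (by omega) hj)) (h p.2 (le_trans (by omega) hj))

lemma coeff_pow_mono {g1 g2 : PowerSeries ℝ} {m : ℕ}
    (h1 : ∀ j ≤ m, 0 ≤ PowerSeries.coeff (R := ℝ) j g1)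
    (h2 : ∀ j ≤ m, 0 ≤ PowerSeries.coeff (R := ℝ) j g2)
    (hle : ∀ j ≤ m, PowerSeries.coeff (R := ℝ) j g1 ≤ PowerSeries.coeff (R := ℝ) j g2) :
    ∀ k, ∀ j ≤ m, PowerSeries.coeff (R := ℝ) j (g1 ^ k) ≤ PowerSeries.coeff (R := ℝ) j (g2 ^ k) := by
  intro k
  induction k with
  | zero => intro j hj; simp
  | succ k ih =>
    intro j hj
    rw [pow_succ, pow_succ, PowerSeries.coeff_mul, PowerSeries.coeff_mul]
    refine Finset.sum_le_sum fun p hp => ?_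
    rw [Finset.HasAntidiagonal.mem_antidiagonal] at hp
    have hp1 : p.1 ≤ m := le_trans (by omega) hj
    have hp2 : p.2 ≤ m := le_trans (by omega) hj
    exact mul_le_mul (ih p.1 hp1) (hle p.2 hp2) (h1 p.2 hp2)
      (coeff_pow_nonneg h2 k p.1 hp1)

lemma psComp_coeff_nonneg {ψ g : PowerSeries ℝ}
    (hψ : ∀ n, 0 ≤ PowerSeries.coeff (R := ℝ) n ψ)
    {m : ℕ} (h : ∀ j ≤ m, 0 ≤ PowerSeries.coeff (R := ℝ) j g) :
    0 ≤ PowerSeries.coeff (R := ℝ) m (psComp ψ g) := by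
  rw [psComp_coeff]
  exact Finset.sum_nonneg fun k _ =>
    mul_nonneg (hψ k) (coeff_pow_nonneg h k m le_rfl)

lemma psComp_coeff_mono {ψ g1 g2 : PowerSeries ℝ}
    (hψ : ∀ n, 0 ≤ PowerSeries.coeff (R := ℝ) n ψ) {m : ℕ}
    (h1 : ∀ j ≤ m, 0 ≤ PowerSeries.coeff (R := ℝ) j g1)
    (h2 : ∀ j ≤ m, 0 ≤ PowerSeries.coeff (R := ℝ) j g2)
    (hle : ∀ j ≤ m, PowerSeries.coeff (R := ℝ) j g1 ≤ PowerSeries.coeff (R := ℝ) j g2) :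
    PowerSeries.coeff (R := ℝ) m (psComp ψ g1) ≤ PowerSeries.coeff (R := ℝ) m (psComp ψ g2) := by
  rw [psComp_coeff, psComp_coeff]
  exact Finset.sum_le_sum fun k _ =>
    mul_le_mul_of_nonneg_left (coeff_pow_mono h1 h2 hle k m le_rfl) (hψ k)

lemma coeff_pow_eq_zero {h : PowerSeries ℝ} {M : ℕ}
    (hz : ∀ m ≤ M, PowerSeries.coeff (R := ℝ) m h = 0) :
    ∀ k, 1 ≤ k → ∀ m ≤ M, PowerSeries.coeff (R := ℝ) m (h ^ k) = 0 := by
  intro k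
  induction k with
  | zero => omega
  | succ k ih =>
    intro _ m hm
    rw [pow_succ, PowerSeries.coeff_mul]
    refine Finset.sum_eq_zero fun p hp => ?_
    rw [Finset.HasAntidiagonal.mem_antidiagonal] at hp
    rw [hz p.2 (le_trans (by omega) hm), mul_zero]

/-- For g = Σ A_n z^n solving g = zψ(g), ψ with nonnegative coefficients and
b_0 = ψ(0) > 0, the iterates g_0 = g, g_k = z(ψ(g_{k−1}) − b_0) have coefficients A_n^{(k)}
satisfying 0 ≤ A_n^{(k)} ≤ A_n^{(k−1)} ≤ A_n for n, k ≥ 1, and A_n^{(k)} = 0 for 1 ≤ n ≤ k. -/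
theorem stmt_6 (ψ : PowerSeries ℝ)
    (hψ : ∀ n, 0 ≤ PowerSeries.coeff (R := ℝ) n ψ)
    (hb0 : 0 < PowerSeries.constantCoeff (R := ℝ) ψ)
    (g : PowerSeries ℝ)
    (hg0 : PowerSeries.constantCoeff (R := ℝ) g = 0)
    (hlag : g = PowerSeries.X * psComp ψ g)
    (gk : ℕ → PowerSeries ℝ)
    (hgk0 : gk 0 = g)
    (hgkrec : ∀ k, gk (k + 1) =
      PowerSeries.X * (psComp ψ (gk k) - PowerSeries.C (R := ℝ) (PowerSeries.constantCoeff (R := ℝ) ψ))) :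
    ∀ n k : ℕ, 1 ≤ n → 1 ≤ k →
      (0 ≤ PowerSeries.coeff (R := ℝ) n (gk k) ∧
       PowerSeries.coeff (R := ℝ) n (gk k) ≤ PowerSeries.coeff (R := ℝ) n (gk (k - 1)) ∧
       PowerSeries.coeff (R := ℝ) n (gk (k - 1)) ≤ PowerSeries.coeff (R := ℝ) n g) ∧
      (n ≤ k → PowerSeries.coeff (R := ℝ) n (gk k) = 0) := by
  set b0 := PowerSeries.constantCoeff (R := ℝ) ψ with hb0def
  -- coefficient 0 of g
  have hg00 : PowerSeries.coeff (R := ℝ) 0 g = 0 := by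
    rw [PowerSeries.coeff_zero_eq_constantCoeff]; exact hg0
  -- nonnegativity of coefficients of g, by strong induction
  have hA : ∀ n, 0 ≤ PowerSeries.coeff (R := ℝ) n g := by
    intro n
    induction n using Nat.strong_induction_on with
    | _ n ih =>
      rcases n with _ | n
      · exact hg00.ge
      · conv_rhs => rw [hlag, PowerSeries.coeff_succ_X_mul]
        exact psComp_coeff_nonneg hψ fun j hj => ih j (by omega)
  -- constant coefficient of each gk is 0
  have hzero : ∀ k, PowerSeries.coeff (R := ℝ) 0 (gk k) = 0 := by
    intro k
    cases k with
    | zero => rw [hgk0]; exact hg00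
    | succ k =>
      rw [hgkrec k, PowerSeries.coeff_zero_eq_constantCoeff, map_mul,
        PowerSeries.constantCoeff_X, zero_mul]
  -- coeff 0 of psComp ψ h is b0
  have hcomp0 : ∀ h : PowerSeries ℝ, PowerSeries.coeff (R := ℝ) 0 (psComp ψ h) = b0 := by
    intro h
    rw [psComp_coeff]
    simp [PowerSeries.coeff_zero_eq_constantCoeff, hb0def]
  -- coefficient formula for gk (k+1)
  have hcoeff : ∀ k n, PowerSeries.coeff (R := ℝ) (n + 1) (gk (k + 1)) =
      PowerSeries.coeff (R := ℝ) n (psComp ψ (gk k)) - (if n = 0 then b0 else 0) := by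
    intro k n
    rw [hgkrec k, PowerSeries.coeff_succ_X_mul, map_sub, PowerSeries.coeff_C]
  -- key invariant: nonneg and bounded by g
  have key : ∀ k, (∀ n, 0 ≤ PowerSeries.coeff (R := ℝ) n (gk k)) ∧
      (∀ n, PowerSeries.coeff (R := ℝ) n (gk k) ≤ PowerSeries.coeff (R := ℝ) n g) := by
    intro k
    induction k with
    | zero => rw [hgk0]; exact ⟨hA, fun n => le_rfl⟩
    | succ k ih =>
      obtain ⟨ih1, ih2⟩ := ih
      constructor
      · intro n
        match n with
        | 0 => rw [hzero]
        | n + 1 =>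
          rw [hcoeff]
          match n with
          | 0 => rw [hcomp0]; simp
          | n + 1 =>
            rw [if_neg (Nat.succ_ne_zero n), sub_zero]
            exact psComp_coeff_nonneg hψ fun j _ => ih1 j
      · intro n
        match n with
        | 0 => rw [hzero, hg00]
        | n + 1 =>
          rw [hcoeff]
          conv_rhs => rw [hlag]
          rw [PowerSeries.coeff_succ_X_mul]
          have hmono : PowerSeries.coeff (R := ℝ) n (psComp ψ (gk k)) ≤
              PowerSeries.coeff (R := ℝ) n (psComp ψ g) :=
            psComp_coeff_mono hψ (fun j _ => ih1 j) (fun j _ => hA j) (fun j _ => ih2 j)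
          have : (0:ℝ) ≤ (if n = 0 then b0 else 0) := by
            split <;> [exact le_of_lt hb0; exact le_rfl]
          linarith
  -- monotonicity in k
  have mono : ∀ k n, PowerSeries.coeff (R := ℝ) n (gk (k + 1)) ≤ PowerSeries.coeff (R := ℝ) n (gk k) := by
    intro k
    induction k with
    | zero => intro n; rw [hgk0]; exact (key 1).2 n
    | succ k ih =>
      intro n
      match n with
      | 0 => rw [hzero, hzero]
      | n + 1 =>
        rw [hcoeff, hcoeff]
        have := psComp_coeff_mono hψ (m := n) (fun j _ => (key (k+1)).1 j)
          (fun j _ => (key k).1 j) (fun j _ => ih j)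
        linarith
  -- vanishing of low coefficients
  have vanish : ∀ k, ∀ m ≤ k, PowerSeries.coeff (R := ℝ) m (gk k) = 0 := by
    intro k
    induction k with
    | zero =>
      intro m hm
      interval_cases m
      exact hzero 0
    | succ k ih =>
      intro m hm
      match m with
      | 0 => exact hzero _
      | j + 1 =>
        rw [hcoeff]
        match j with
        | 0 => rw [hcomp0]; simp
        | j + 1 =>
          rw [if_neg (Nat.succ_ne_zero j), sub_zero, psComp_coeff]
          refine Finset.sum_eq_zero fun i hi => ?_
          match i with
          | 0 => simp [PowerSeries.coeff_one]
          | i + 1 =>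
            rw [coeff_pow_eq_zero (M := k) (fun m hm => ih m hm) (i + 1) (by omega)
              (j + 1) (by omega), mul_zero]
  -- conclude
  intro n k hn hk
  obtain ⟨k, rfl⟩ : ∃ k', k = k' + 1 := ⟨k - 1, by omega⟩
  refine ⟨⟨(key (k + 1)).1 n, ?_, ?_⟩, fun hnk => vanish (k + 1) n hnk⟩
  · simpa using mono k n
  · simpa using (key k).2 n
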